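/- arXiv:2309.00765 — 4 statements merged into one kernel-verified Lean document; each statement's English description precedes it below -/
import Mathlib

section
/- Conversely, if x in P = {x : Ax = b, x >= 0} and the columns of A indexed by supp(x) are linearly independent, then x is an extreme point of P. -/
open Matrix Finset

/-- Conversely, if `x ∈ P = {x : A x = b, x ≥ 0}` and the columns of `A`
indexed by the support of `x` are linearly independent, then `x` is an
extreme point of `P`. -/
theorem linearIndependent_support_cols_extremePoint (m n : ℕ)
    (A : Matrix (Fin m) (Fin n) ℝ) (b : Fin m → ℝ)
    (P : Set (Fin n → ℝ))
    (hP : P = {x : Fin n → ℝ | A *ᵥ x = b ∧ 0 ≤ x})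
    (x : Fin n → ℝ) (hxP : x ∈ P)
    (hli : LinearIndependent ℝ (fun i : {i : Fin n // x i ≠ 0} => Aᵀ i.val)) :
    x ∈ Set.extremePoints ℝ P := by
  subst hP
  obtain ⟨hxA, hx0⟩ := hxP
  refine ⟨⟨hxA, hx0⟩, ?_⟩
  rintro y ⟨hyA, hy0⟩ z ⟨hzA, hz0⟩ hseg
  obtain ⟨a, c, ha, hc, hac, hx⟩ := hseg
  have hzero : ∀ i, x i = 0 → y i = 0 ∧ z i = 0 := by
    intro i hi
    have h1 : a * y i + c * z i = 0 := by
      have := congrFun hx i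
      simp only [Pi.add_apply, Pi.smul_apply, smul_eq_mul, hi] at this
      linarith
    have hyi : (0:ℝ) ≤ y i := hy0 i
    have hzi : (0:ℝ) ≤ z i := hz0 i
    constructor
    · nlinarith
    · nlinarith
  have hyz : y = z := by
    have hfull : ∑ i : Fin n, (y i - z i) • Aᵀ i = 0 := by
      funext j
      have h1 := congrFun hyA j
      have h2 := congrFun hzA j
      simp only [Matrix.mulVec, dotProduct] at h1 h2
      simp only [Finset.sum_apply, Pi.smul_apply, smul_eq_mul, Matrix.transpose_apply,
        Pi.zero_apply, sub_mul, Finset.sum_sub_distrib]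
      have e1 : ∑ i, y i * A j i = ∑ i, A j i * y i := by
        apply Finset.sum_congr rfl; intros; ring
      have e2 : ∑ i, z i * A j i = ∑ i, A j i * z i := by
        apply Finset.sum_congr rfl; intros; ring
      rw [e1, e2, h1, h2]; ring
    have hsum : ∑ i : {i : Fin n // x i ≠ 0}, (y i.val - z i.val) • Aᵀ i.val = 0 := by
      rw [← Finset.sum_subtype (Finset.univ.filter (fun i => x i ≠ 0))
        (by simp) (fun i => (y i - z i) • Aᵀ i)]
      rw [Finset.sum_filter_of_ne ?_]
      · exact hfull
      · intro i _ hne hi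
        obtain ⟨h1, h2⟩ := hzero i hi
        apply hne
        rw [h1, h2, sub_self, zero_smul]
    have hg := (Fintype.linearIndependent_iff.mp hli) (fun i => y i.val - z i.val) hsum
    funext i
    by_cases hi : x i = 0
    · rw [(hzero i hi).1, (hzero i hi).2]
    · have := hg ⟨i, hi⟩
      simp at this
      linarith
  subst hyz
  rw [← add_smul, hac, one_smul] at hx
  exact hx
end

section
/- Let \phi_1 = 1_n/\sqrt{n}, \phi_2, ..., \phi_n be an orthonormal basis of R^n, 1 in J \subseteq [n], and a >= 0 with \sum_i a_i = 1 and \phi_j^T a = 0 for all j in J\{1}. Then for any f in R^n, |(1/n)\sum_{i in [n]} f(i) - \sum_{i in [n]} a_i f(i)| <= \sum_{i in [n]} a_i |\sum_{j in J-complement} \phi_j(i)(\phi_j^T f)|. -/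
open Matrix Finset

/-- Parametric bound on the absolute integration error:
`|(1/n)∑ᵢ f(i) - ∑ᵢ aᵢ f(i)| ≤ ∑ᵢ aᵢ |∑_{j ∈ Jᶜ} φⱼ(i)(φⱼᵀf)|`. -/
theorem parametric_error_bound (n : ℕ) (hn : 0 < n)
    (φ : Fin n → (Fin n → ℝ))
    (horth : ∀ j k, φ j ⬝ᵥ φ k = if j = k then (1 : ℝ) else 0)
    (hφ0 : φ ⟨0, hn⟩ = fun _ => 1 / Real.sqrt n)
    (J : Finset (Fin n)) (hJ : (⟨0, hn⟩ : Fin n) ∈ J)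
    (a : Fin n → ℝ) (ha : 0 ≤ a)
    (hsum : ∑ i, a i = 1)
    (haJ : ∀ j ∈ J, j ≠ ⟨0, hn⟩ → φ j ⬝ᵥ a = 0)
    (f : Fin n → ℝ) :
    |((1 : ℝ) / n) * ∑ i, f i - ∑ i, a i * f i| ≤
      ∑ i, a i * |∑ j ∈ Jᶜ, φ j i * (φ j ⬝ᵥ f)| := by
  -- orthonormal columns
  have h1 : (Matrix.of φ) * (Matrix.of φ)ᵀ = 1 := by
    ext j k
    simpa [Matrix.mul_apply, Matrix.one_apply, dotProduct] using horth j k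
  have h2 : (Matrix.of φ)ᵀ * (Matrix.of φ) = 1 := mul_eq_one_comm.mp h1
  have key : ∀ i k, ∑ j, φ j i * φ j k = if i = k then (1 : ℝ) else 0 := by
    intro i k
    have := congrFun (congrFun h2 i) k
    simpa [Matrix.mul_apply, Matrix.one_apply] using this
  -- expansion of f
  have hexp : ∀ i, f i = ∑ j, φ j i * (φ j ⬝ᵥ f) := by
    intro i
    have h : ∑ j, φ j i * (∑ k, φ j k * f k) = f i := by
      calc ∑ j, φ j i * (∑ k, φ j k * f k)
          = ∑ k, (∑ j, φ j i * φ j k) * f k := by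
            simp_rw [Finset.mul_sum, Finset.sum_mul, mul_assoc]
            rw [Finset.sum_comm]
        _ = f i := by simp [key]
    simpa [dotProduct] using h.symm
  -- main identity
  have hmain : ∑ i, a i * f i
      = ((1 : ℝ) / n) * ∑ i, f i + ∑ i, a i * ∑ j ∈ Jᶜ, φ j i * (φ j ⬝ᵥ f) := by
    have hswap : ∑ i, a i * f i = ∑ j, (φ j ⬝ᵥ f) * (φ j ⬝ᵥ a) := by
      calc ∑ i, a i * f i = ∑ i, a i * ∑ j, φ j i * (φ j ⬝ᵥ f) := by
            simp_rw [← hexp]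
        _ = ∑ j, (φ j ⬝ᵥ f) * (φ j ⬝ᵥ a) := by
            simp_rw [Finset.mul_sum]
            rw [Finset.sum_comm]
            refine Finset.sum_congr rfl fun j _ => ?_
            rw [show φ j ⬝ᵥ a = ∑ i, φ j i * a i from rfl, Finset.mul_sum]
            exact Finset.sum_congr rfl fun i _ => by ring
    have hsplit : ∑ j, (φ j ⬝ᵥ f) * (φ j ⬝ᵥ a)
        = ∑ j ∈ J, (φ j ⬝ᵥ f) * (φ j ⬝ᵥ a) + ∑ j ∈ Jᶜ, (φ j ⬝ᵥ f) * (φ j ⬝ᵥ a) := by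
      rw [← Finset.sum_add_sum_compl J]
    have hJterm : ∑ j ∈ J, (φ j ⬝ᵥ f) * (φ j ⬝ᵥ a) = ((1 : ℝ) / n) * ∑ i, f i := by
      rw [Finset.sum_eq_single (⟨0, hn⟩ : Fin n)]
      · have hna : (0:ℝ) < Real.sqrt n := Real.sqrt_pos.mpr (by exact_mod_cast hn)
        have hmul : Real.sqrt n * Real.sqrt n = n :=
          Real.mul_self_sqrt (by positivity)
        simp only [hφ0, dotProduct]
        rw [← Finset.mul_sum, ← Finset.mul_sum, hsum, mul_one, ← hmul]
        have hne : Real.sqrt n ≠ 0 := ne_of_gt hna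
        field_simp
        rw [Real.sqrt_sq hna.le]
      · intro j hjJ hjne
        rw [haJ j hjJ hjne, mul_zero]
      · intro h; exact absurd hJ h
    have hCterm : ∑ j ∈ Jᶜ, (φ j ⬝ᵥ f) * (φ j ⬝ᵥ a)
        = ∑ i, a i * ∑ j ∈ Jᶜ, φ j i * (φ j ⬝ᵥ f) := by
      simp_rw [Finset.mul_sum]
      rw [Finset.sum_comm]
      refine Finset.sum_congr rfl fun j _ => ?_
      rw [show φ j ⬝ᵥ a = ∑ i, φ j i * a i from rfl, Finset.mul_sum]
      exact Finset.sum_congr rfl fun i _ => by ring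
    rw [hswap, hsplit, hJterm, hCterm]
  have : ((1 : ℝ) / n) * ∑ i, f i - ∑ i, a i * f i
      = -∑ i, a i * ∑ j ∈ Jᶜ, φ j i * (φ j ⬝ᵥ f) := by
    rw [hmain]; ring
  rw [this, abs_neg]
  calc |∑ i, a i * ∑ j ∈ Jᶜ, φ j i * (φ j ⬝ᵥ f)|
      ≤ ∑ i, |a i * ∑ j ∈ Jᶜ, φ j i * (φ j ⬝ᵥ f)| := Finset.abs_sum_le_sum_abs _ _
    _ = ∑ i, a i * |∑ j ∈ Jᶜ, φ j i * (φ j ⬝ᵥ f)| := by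
        congr 1; ext i
        rw [abs_mul, abs_of_nonneg (ha i)]
end

section
/- Under the hypotheses of the parametric error bound, if additionally sqrt(\sum_{j in J-complement} (\phi_j^T f)^2) <= 1, then |(1/n)\sum_i f(i) - \sum_i a_i f(i)| <= \sum_{i in [n]} a_i sqrt(\sum_{j in J-complement} \phi_j(i)^2). -/
open Matrix Finset

/-- Nonparametric bound: if the energy of `f` outside `J` is at most 1, then
`|(1/n)∑ᵢ f(i) - ∑ᵢ aᵢ f(i)| ≤ ∑ᵢ aᵢ √(∑_{j ∈ Jᶜ} φⱼ(i)²)`. -/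
theorem nonparametric_error_bound (n : ℕ) (hn : 0 < n)
    (φ : Fin n → (Fin n → ℝ))
    (horth : ∀ j k, φ j ⬝ᵥ φ k = if j = k then (1 : ℝ) else 0)
    (hφ0 : φ ⟨0, hn⟩ = fun _ => 1 / Real.sqrt n)
    (J : Finset (Fin n)) (hJ : (⟨0, hn⟩ : Fin n) ∈ J)
    (a : Fin n → ℝ) (ha : 0 ≤ a)
    (hsum : ∑ i, a i = 1)
    (haJ : ∀ j ∈ J, j ≠ ⟨0, hn⟩ → φ j ⬝ᵥ a = 0)
    (f : Fin n → ℝ)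
    (hf : Real.sqrt (∑ j ∈ Jᶜ, (φ j ⬝ᵥ f) ^ 2) ≤ 1) :
    |((1 : ℝ) / n) * ∑ i, f i - ∑ i, a i * f i| ≤
      ∑ i, a i * Real.sqrt (∑ j ∈ Jᶜ, (φ j i) ^ 2) := by
  -- column orthogonality (delta identity)
  have hδ : ∀ i k : Fin n, (∑ j, φ j i * φ j k) = if i = k then (1:ℝ) else 0 := by
    have h1 : (Matrix.of φ) * (Matrix.of φ)ᵀ = 1 := by
      ext j k
      simpa [Matrix.mul_apply, dotProduct, Matrix.one_apply] using horth j k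
    have h2 : (Matrix.of φ)ᵀ * (Matrix.of φ) = 1 := mul_eq_one_comm.mp h1
    intro i k
    have := congrFun (congrFun h2 i) k
    simpa [Matrix.mul_apply, Matrix.one_apply] using this
  -- Parseval
  have hpar : ∑ j, (φ j ⬝ᵥ a) * (φ j ⬝ᵥ f) = ∑ i, a i * f i := by
    simp only [dotProduct, Finset.sum_mul_sum]
    rw [Finset.sum_comm]
    refine Finset.sum_congr rfl fun i _ => ?_
    rw [Finset.sum_comm]
    calc ∑ k, ∑ j, (φ j i * a i) * (φ j k * f k)
        = ∑ k, (a i * f k) * ∑ j, φ j i * φ j k := by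
          refine Finset.sum_congr rfl fun k _ => ?_
          rw [Finset.mul_sum]
          exact Finset.sum_congr rfl fun j _ => by ring
      _ = a i * f i := by
          simp only [hδ, mul_ite, mul_one, mul_zero]
          simp
  have hs : Real.sqrt n * Real.sqrt n = (n : ℝ) := Real.mul_self_sqrt (Nat.cast_nonneg n)
  have hn' : (0:ℝ) < n := by exact_mod_cast hn
  have hsne : Real.sqrt n ≠ 0 := by positivity
  -- sum over J
  have hJsum : ∑ j ∈ J, (φ j ⬝ᵥ a) * (φ j ⬝ᵥ f) = ((1:ℝ)/n) * ∑ i, f i := by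
    rw [Finset.sum_eq_single (⟨0, hn⟩ : Fin n)]
    · rw [hφ0]
      simp only [dotProduct, ← Finset.mul_sum]
      rw [hsum, mul_one, ← mul_assoc, div_mul_div_comm, one_mul, hs]
    · intro j hj hne
      rw [haJ j hj hne, zero_mul]
    · intro h; exact absurd hJ h
  -- error identity
  have herr : ((1:ℝ)/n) * ∑ i, f i - ∑ i, a i * f i
      = -∑ j ∈ Jᶜ, (φ j ⬝ᵥ a) * (φ j ⬝ᵥ f) := by
    have := Finset.sum_add_sum_compl J (fun j => (φ j ⬝ᵥ a) * (φ j ⬝ᵥ f))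
    rw [hJsum] at this
    rw [hpar] at this
    linarith
  rw [herr, abs_neg]
  -- swap sums
  have hkey : ∀ c : Fin n → ℝ, ∑ j ∈ Jᶜ, (φ j ⬝ᵥ a) * c j
      = ∑ i, a i * ∑ j ∈ Jᶜ, φ j i * c j := by
    intro c
    simp only [dotProduct, Finset.sum_mul, Finset.mul_sum]
    rw [Finset.sum_comm]
    exact Finset.sum_congr rfl fun i _ => Finset.sum_congr rfl fun j _ => by ring
  have hswap : ∑ j ∈ Jᶜ, (φ j ⬝ᵥ a) * (φ j ⬝ᵥ f)
      = ∑ i, a i * ∑ j ∈ Jᶜ, φ j i * (φ j ⬝ᵥ f) := hkey _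
  rw [hswap]
  calc |∑ i, a i * ∑ j ∈ Jᶜ, φ j i * (φ j ⬝ᵥ f)|
      ≤ ∑ i, |a i * ∑ j ∈ Jᶜ, φ j i * (φ j ⬝ᵥ f)| := Finset.abs_sum_le_sum_abs _ _
    _ ≤ ∑ i, a i * Real.sqrt (∑ j ∈ Jᶜ, (φ j i) ^ 2) := by
        refine Finset.sum_le_sum fun i _ => ?_
        rw [abs_mul, abs_of_nonneg (ha i)]
        refine mul_le_mul_of_nonneg_left ?_ (ha i)
        -- Cauchy–Schwarz
        have h2 : (∑ j ∈ Jᶜ, φ j i * (φ j ⬝ᵥ f)) ^ 2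
            ≤ (∑ j ∈ Jᶜ, (φ j i) ^ 2) * (∑ j ∈ Jᶜ, (φ j ⬝ᵥ f) ^ 2) :=
          Finset.sum_mul_sq_le_sq_mul_sq Jᶜ _ _
        have h3 : |∑ j ∈ Jᶜ, φ j i * (φ j ⬝ᵥ f)|
            ≤ Real.sqrt (∑ j ∈ Jᶜ, (φ j i) ^ 2) * Real.sqrt (∑ j ∈ Jᶜ, (φ j ⬝ᵥ f) ^ 2) := by
          rw [← Real.sqrt_sq_eq_abs, ← Real.sqrt_mul (by positivity)]
          exact Real.sqrt_le_sqrt h2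
        refine h3.trans ?_
        have h4 : (0:ℝ) ≤ Real.sqrt (∑ j ∈ Jᶜ, (φ j i) ^ 2) := Real.sqrt_nonneg _
        nlinarith [Real.sqrt_nonneg (∑ j ∈ Jᶜ, (φ j ⬝ᵥ f) ^ 2)]
end

section
/- For any subset J \subseteq [n] with 1 in J and any k >= |J|, there exists a J-graphical design (S, a) with a >= 0, nonzero, and |S| = |supp(a)| <= k; i.e., the feasibility system requiring \sum_i a_i \phi_1(i) = (1/n)\sum_i \phi_1(i), \sum_i a_i \phi_j(i) = 0 for j in J\{1}, a >= 0, and |supp(a)| <= k has a solution. -/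
open Matrix Finset

/-- For any `J` containing the index of the constant eigenvector and any
`k ≥ |J|`, there exists a `J`-graphical design with nonnegative, nonzero
weights supported on at most `k` nodes. -/
theorem sparse_design_exists (n : ℕ) (hn : 0 < n)
    (φ : Fin n → (Fin n → ℝ))
    (horth : ∀ j k, φ j ⬝ᵥ φ k = if j = k then (1 : ℝ) else 0)
    (hφ0 : φ ⟨0, hn⟩ = fun _ => 1 / Real.sqrt n)
    (J : Finset (Fin n)) (hJ : (⟨0, hn⟩ : Fin n) ∈ J)
    (k : ℕ) (hk : J.card ≤ k) :
    ∃ a : Fin n → ℝ, 0 ≤ a ∧ a ≠ 0 ∧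
      φ ⟨0, hn⟩ ⬝ᵥ a = ((1 : ℝ) / n) * ∑ i, φ ⟨0, hn⟩ i ∧
      (∀ j ∈ J, j ≠ ⟨0, hn⟩ → φ j ⬝ᵥ a = 0) ∧
      (Finset.univ.filter (fun i => a i ≠ 0)).card ≤ k := by
  set j0 : Fin n := ⟨0, hn⟩ with hj0
  have hnR : (0 : ℝ) < n := by exact_mod_cast hn
  have hsqrt : Real.sqrt n ≠ 0 := by positivity
  -- sum of each non-constant eigenvector is zero
  have hsum0 : ∀ j : Fin n, j ≠ j0 → ∑ i, φ j i = 0 := by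
    intro j hj
    have h := horth j j0
    rw [if_neg hj, hφ0] at h
    have : (∑ i, φ j i) * (1 / Real.sqrt n) = 0 := by
      rw [← h]; simp [dotProduct, Finset.sum_mul]
    rcases mul_eq_zero.1 this with h' | h'
    · exact h'
    · exact absurd h' (by simp [hsqrt])
  -- the points of constraint coordinates
  set x : Fin n → ({j // j ∈ J.erase j0} → ℝ) := fun i j => φ j.1 i with hx
  -- 0 is the center of mass of the points x i with uniform weights
  have hmem : (0 : {j // j ∈ J.erase j0} → ℝ) ∈ convexHull ℝ (Set.range x) := by
    have h := Finset.centerMass_mem_convexHull (Finset.univ : Finset (Fin n))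
      (w := fun _ => (1 : ℝ)) (z := x) (fun _ _ => zero_le_one)
      (by simpa using hnR) (fun i _ => Set.mem_range_self i)
    have hcm : (Finset.univ : Finset (Fin n)).centerMass (fun _ => (1 : ℝ)) x = 0 := by
      rw [Finset.centerMass]
      have hz : ∑ i : Fin n, (1 : ℝ) • x i = 0 := by
        funext j
        have hj : j.1 ≠ j0 := (Finset.mem_erase.1 j.2).1
        simpa [hx, Finset.sum_apply] using hsum0 j.1 hj
      rw [hz, smul_zero]
    rwa [hcm] at h
  obtain ⟨ι, hfin, z, w, hrange, hindep, hwpos, hwsum, hcomb⟩ :=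
    eq_pos_convex_span_of_mem_convexHull hmem
  -- choose preimages
  have hpre : ∀ i : ι, ∃ m : Fin n, x m = z i := fun i => hrange (Set.mem_range_self i)
  choose g hg using hpre
  have hzinj : Function.Injective z := hindep.injective
  have hginj : Function.Injective g := fun i i' h => hzinj (by rw [← hg, ← hg, h])
  -- cardinality bound
  have hJpos : 0 < J.card := Finset.card_pos.2 ⟨j0, hJ⟩
  have hcard : Fintype.card ι ≤ J.card := by
    have h1 := hindep.card_le_finrank_succ
    have h2 : Module.finrank ℝ (vectorSpan ℝ (Set.range z)) ≤
        Module.finrank ℝ ({j // j ∈ J.erase j0} → ℝ) :=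
      Submodule.finrank_le _
    have h3 : Module.finrank ℝ ({j // j ∈ J.erase j0} → ℝ) = (J.erase j0).card := by
      rw [Module.finrank_pi, Fintype.card_coe]
    have h4 : (J.erase j0).card + 1 = J.card := by
      rw [Finset.card_erase_of_mem hJ]; omega
    omega
  -- the weight vector
  set a : Fin n → ℝ := Function.extend g w 0 with ha
  have hag : ∀ i : ι, a (g i) = w i := by
    intro i
    rw [ha, Function.Injective.extend_apply hginj]
  have haz : ∀ m : Fin n, (¬ ∃ i, g i = m) → a m = 0 := by
    intro m hm
    rw [ha]
    exact Function.extend_apply' w (fun _ => (0 : ℝ)) m hm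
  -- key sum identity
  have hkey : ∀ F : Fin n → ℝ, ∑ i, F i * a i = ∑ i : ι, F (g i) * w i := by
    intro F
    calc ∑ i, F i * a i = ∑ m ∈ Finset.univ.image g, F m * a m := by
          symm
          apply Finset.sum_subset (Finset.subset_univ _)
          intro m _ hm
          have hnm : ¬ ∃ i, g i = m := fun ⟨i, hi⟩ =>
            hm (Finset.mem_image.2 ⟨i, Finset.mem_univ i, hi⟩)
          rw [haz m hnm, mul_zero]
      _ = ∑ i : ι, F (g i) * a (g i) :=
          Finset.sum_image (fun i _ i' _ h => hginj h)
      _ = ∑ i : ι, F (g i) * w i := by simp_rw [hag]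
  have hanonneg : 0 ≤ a := by
    intro m
    by_cases hm : ∃ i, g i = m
    · obtain ⟨i, rfl⟩ := hm
      have := (hwpos i).le
      rw [← hag i] at this
      exact this
    · have := haz m hm
      simp only [Pi.zero_apply]
      rw [this]
  have hne : Nonempty ι := by
    by_contra h
    rw [not_nonempty_iff] at h
    rw [Finset.univ_eq_empty, Finset.sum_empty] at hwsum
    exact one_ne_zero hwsum.symm
  refine ⟨a, hanonneg, ?_, ?_, ?_, ?_⟩
  · intro h
    obtain ⟨i⟩ := hne
    have : a (g i) = 0 := by rw [h]; rfl
    rw [hag] at this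
    exact absurd this (hwpos i).ne'
  · have hd : φ j0 ⬝ᵥ a = ∑ i, φ j0 i * a i := rfl
    rw [hd, hkey, hφ0]
    simp only [one_div]
    rw [← Finset.mul_sum, hwsum, mul_one, Finset.sum_const, Finset.card_univ,
      Fintype.card_fin, nsmul_eq_mul]
    field_simp
  · intro j hjJ hjne
    have hje : j ∈ J.erase j0 := Finset.mem_erase.2 ⟨hjne, hjJ⟩
    have hd : φ j ⬝ᵥ a = ∑ i, φ j i * a i := rfl
    rw [hd, hkey]
    have h0 := congrFun hcomb ⟨j, hje⟩
    have h0' : ∑ i : ι, w i * z i ⟨j, hje⟩ = 0 := by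
      simpa [Finset.sum_apply] using h0
    rw [← h0']
    apply Finset.sum_congr rfl
    intro i _
    rw [← hg i]
    simp [hx, mul_comm]
  · calc (Finset.univ.filter (fun i => a i ≠ 0)).card
        ≤ (Finset.univ.image g).card := by
          apply Finset.card_le_card
          intro m hm
          rw [Finset.mem_filter] at hm
          by_contra h
          have hnm : ¬ ∃ i, g i = m := fun ⟨i, hi⟩ =>
            h (Finset.mem_image.2 ⟨i, Finset.mem_univ i, hi⟩)
          exact hm.2 (haz m hnm)
      _ ≤ Fintype.card ι := by
          rw [Finset.card_image_of_injective _ hginj, Finset.card_univ]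
      _ ≤ J.card := hcard
      _ ≤ k := hk
end
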